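/- Let K be a field of characteristic 2, R a K-vector space, and Q : R → K a map that is additive and satisfies Q(a·r) = a²·Q(r) for all a ∈ K, r ∈ R. If Q is injective on a basis's span in the sense that Q(r) = 0 implies r = 0, then dim_K R ≤ [K : K²], where [K : K²] is the dimension of K as a vector space over the field K² of squares. -/
import Mathlib


/-- The subfield `K² = {a² : a ∈ K}` of a field `K` of characteristic 2. -/
def squaresSubfield (K : Type*) [Field K] [CharP K 2] : Subfield K where
  carrier := {a : K | ∃ b : K, a = b ^ 2}
  mul_mem' := by rintro a b ⟨x, rfl⟩ ⟨y, rfl⟩; exact ⟨x * y, by ring⟩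
  one_mem' := ⟨1, by ring⟩
  add_mem' := by
    rintro a b ⟨x, rfl⟩ ⟨y, rfl⟩
    exact ⟨x + y, by rw [CharTwo.add_sq]⟩
  zero_mem' := ⟨0, by ring⟩
  neg_mem' := by
    rintro a ⟨x, rfl⟩
    exact ⟨x, by rw [CharTwo.neg_eq]⟩
  inv_mem' := by
    rintro a ⟨x, rfl⟩
    exact ⟨x⁻¹, (inv_pow x 2).symm⟩

/-- Let `K` be a field of characteristic 2 and `Q : R → K` additive with `Q (a • r) = a² Q r`.
If `Q` is anisotropic (`Q r = 0 → r = 0`), then `dim_K R ≤ [K : K²]`. -/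
theorem rank_le_of_anisotropic_semilinear
    {K R : Type u} [Field K] [CharP K 2] [AddCommGroup R] [Module K R]
    (Q : R → K)
    (hadd : ∀ x y : R, Q (x + y) = Q x + Q y)
    (hsmul : ∀ (a : K) (x : R), Q (a • x) = a ^ 2 * Q x)
    (haniso : ∀ x : R, Q x = 0 → x = 0) :
    Module.rank K R ≤ Module.rank (squaresSubfield K) K := by
  have hQ0 : Q 0 = 0 := by
    have := hadd 0 0
    rw [add_zero] at this
    exact (left_eq_add.mp this)
  set S := squaresSubfield K
  -- Frobenius as a ZeroHom K → S
  let i : ZeroHom K S :=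
    { toFun := fun a => ⟨a ^ 2, a, rfl⟩
      map_zero' := by ext; simp }
  let j : R →+ K :=
    { toFun := Q
      map_zero' := hQ0
      map_add' := hadd }
  have hi : Function.Surjective i := by
    rintro ⟨a, b, rfl⟩
    exact ⟨b, rfl⟩
  have hj : Function.Injective j := by
    intro x y hxy
    have hxy' : Q x = Q y := hxy
    have hneg : Q (-y) = Q y := by
      have := hsmul (-1) y
      simpa using this
    have : Q (x - y) = 0 := by
      rw [sub_eq_add_neg, hadd, hneg, hxy', CharTwo.add_self_eq_zero]
    have := haniso _ this
    exact sub_eq_zero.mp this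
  exact rank_le_of_surjective_injective i j hi hj fun a x => by
    show Q (a • x) = (⟨a ^ 2, a, rfl⟩ : S) • Q x
    rw [hsmul]
    rfl
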